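/- For every fixed positive integer k there exist a real constant C and an integer N such that for all integers n ≥ N with n > k + 1, the single-exclusion number satisfies S(n, n−k−1) ≤ (2/(k+1))·binom(n,k) + C·n^{k−1}, where binom(n,k) denotes the binomial coefficient. (That is, S(n,n−k−1) ≤ (2/(k+1) + O(n^{−1}))·binom(n,k) as n → ∞ for fixed k.) -/

import Mathlib

/-- An `(n,t)`-single-exclusion system: a collection of `t`-subsets (blocks) of an
`n`-set such that every subset `X` with `1 ≤ |X| ≤ t+1` has a block containing all
but exactly one element of `X`. -/
def IsSESystem (n t : ℕ) (S : Finset (Finset (Fin n))) : Prop :=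
  (∀ B ∈ S, B.card = t) ∧
  ∀ X : Finset (Fin n), 1 ≤ X.card → X.card ≤ t + 1 → ∃ B ∈ S, (X \ B).card = 1

/-- The `(n,t)`-single-exclusion number `S(n,t)`: the least number of blocks in an
`(n,t)`-single-exclusion system. -/
noncomputable def SENumber (n t : ℕ) : ℕ :=
  sInf {m : ℕ | ∃ S : Finset (Finset (Fin n)), IsSESystem n t S ∧ S.card = m}

open Finset

namespace SE6
variable {n : ℕ}

def sol2 [NeZero n] (c : ZMod n) : Finset (ZMod n) := Finset.univ.filter (fun b => b + b = c)

lemma mem_sol2 [NeZero n] {c b : ZMod n} : b ∈ sol2 c ↔ b + b = c := by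
  simp [sol2]

lemma card_sol2 [NeZero n] (c : ZMod n) : (sol2 c).card ≤ 2 := by
  classical
  rcases (sol2 (n := n) c).eq_empty_or_nonempty with h | ⟨b0, hb0⟩
  · simp [h]
  · have hinj : (sol2 c).card ≤ ({(0 : ZMod n), ((n/2 : ℕ) : ZMod n)} : Finset (ZMod n)).card := by
      apply Finset.card_le_card_of_injOn (fun b => b - b0)
      · intro b hb
        have hb' := mem_sol2.mp hb
        have hb0' := mem_sol2.mp hb0
        set x := b - b0 with hx
        have h2 : x + x = 0 := by
          rw [hx]
          linear_combination hb' - hb0'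
        have hval : (x.val + x.val) % n = 0 := by
          have := ZMod.val_add x x
          rw [h2] at this
          simpa [ZMod.val_zero] using this.symm
        have hlt := ZMod.val_lt x
        obtain ⟨c', hc'⟩ := Nat.dvd_of_mod_eq_zero hval
        have hc2 : c' < 2 := by
          by_contra hge
          push_neg at hge
          have h1 : n * 2 ≤ n * c' := Nat.mul_le_mul_left n hge
          have hn := Nat.pos_of_ne_zero (NeZero.ne n)
          omega
        interval_cases c'
        · have hx0 : x.val = 0 := by omega
          have : x = 0 := by
            rw [← ZMod.natCast_zmod_val x, hx0]; simp
          simp [← hx, this]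
        · have hx2 : x.val = n / 2 := by omega
          have : x = ((n/2 : ℕ) : ZMod n) := by
            conv_lhs => rw [← ZMod.natCast_zmod_val x]
            rw [hx2]
          simp [← hx, this]
      · intro a _ b _ hab
        simpa using sub_left_inj.mp hab
    calc (sol2 c).card ≤ _ := hinj
    _ ≤ 2 := (Finset.card_insert_le _ _).trans (by simp)

lemma exists_boundary [NeZero n] {Z : Finset (ZMod n)} (hne : Z.Nonempty) (hlt : Z.card < n) :
    ∃ z ∈ Z, z + 1 ∉ Z := by
  by_contra h
  push_neg at h
  obtain ⟨z0, hz0⟩ := hne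
  have hstep : ∀ m : ℕ, z0 + (m : ZMod n) ∈ Z := by
    intro m
    induction m with
    | zero => simpa using hz0
    | succ m ih =>
      have := h _ ih
      push_cast
      convert this using 1
      ring
  have huniv : Z = Finset.univ := by
    apply Finset.eq_univ_of_forall
    intro w
    have := hstep (w - z0).val
    rwa [ZMod.natCast_zmod_val, add_sub_cancel] at this
  rw [huniv, Finset.card_univ, ZMod.card] at hlt
  omega


variable (k : ℕ)

def covered [NeZero n] (ρ : ZMod n) (Z : Finset (ZMod n)) : Prop :=
  ∃ K ∈ Z.powersetCard k, ∃ x, x ∉ Z ∧ (K.sum id + x = ρ ∨ K.sum id + x = ρ + 1)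

instance [NeZero n] (ρ : ZMod n) (Z : Finset (ZMod n)) : Decidable (covered k ρ Z) := by
  unfold covered; infer_instance

def Bad [NeZero n] (ρ : ZMod n) : Finset (Finset (ZMod n)) :=
  Finset.univ.powerset.filter (fun Z => k ≤ Z.card ∧ Z.card < n ∧ ¬ covered k ρ Z)

lemma mem_Bad [NeZero n] {ρ : ZMod n} {Z : Finset (ZMod n)} :
    Z ∈ Bad k ρ ↔ k ≤ Z.card ∧ Z.card < n ∧ ¬ covered k ρ Z := by
  simp [Bad]

lemma bad_sums [NeZero n] {ρ : ZMod n} {Z : Finset (ZMod n)} (hZ : Z ∈ Bad k ρ)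
    {K : Finset (ZMod n)} (hK : K ⊆ Z) (hKc : K.card = k) :
    ρ - K.sum id ∈ Z ∧ ρ + 1 - K.sum id ∈ Z := by
  obtain ⟨-, -, hnc⟩ := (mem_Bad k).mp hZ
  constructor
  · by_contra hx
    exact hnc ⟨K, Finset.mem_powersetCard.mpr ⟨hK, hKc⟩, ρ - K.sum id, hx, Or.inl (by ring)⟩
  · by_contra hx
    exact hnc ⟨K, Finset.mem_powersetCard.mpr ⟨hK, hKc⟩, ρ + 1 - K.sum id, hx, Or.inr (by ring)⟩

/-- Key step: for a bad set and boundary point `z*`, every `k`-subset through `z*`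
contains `ρ - its sum`. -/
lemma bad_key [NeZero n] {ρ : ZMod n} {Z : Finset (ZMod n)} (hZ : Z ∈ Bad k ρ)
    {z : ZMod n} (hzZ : z ∈ Z) (hz1 : z + 1 ∉ Z)
    {K : Finset (ZMod n)} (hK : K ⊆ Z) (hKc : K.card = k) (hzK : z ∈ K) :
    ρ - K.sum id ∈ K := by
  by_contra hδ
  set δ := ρ - K.sum id with hδdef
  have hδZ : δ ∈ Z := (bad_sums k hZ hK hKc).1
  -- K1 = insert δ (K.erase z)
  set K1 := insert δ (K.erase z) with hK1
  have hδe : δ ∉ K.erase z := fun h => hδ (Finset.mem_of_mem_erase h)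
  have hK1Z : K1 ⊆ Z := by
    intro y hy
    rcases Finset.mem_insert.mp hy with rfl | hy
    · exact hδZ
    · exact hK (Finset.mem_of_mem_erase hy)
  have hk1 : 1 ≤ k := hKc ▸ Finset.card_pos.mpr ⟨z, hzK⟩
  have hK1c : K1.card = k := by
    rw [hK1, Finset.card_insert_of_notMem hδe, Finset.card_erase_of_mem hzK, hKc]
    omega
  have hsum : K1.sum id = ρ - z := by
    rw [hK1, Finset.sum_insert hδe]
    have := Finset.sum_erase_add K id hzK
    have h2 : (K.erase z).sum id = K.sum id - z := by
      simp only [id] at this ⊢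
      linear_combination this
    rw [h2, hδdef]
    simp only [id_eq]
    ring
  have := (bad_sums k hZ hK1Z hK1c).2
  rw [hsum] at this
  have : z + 1 ∈ Z := by
    convert this using 1
    ring
  exact hz1 this

def BigU [NeZero n] (ρ : ZMod n) (K0' : Finset (ZMod n)) : Finset (ZMod n) :=
  K0' ∪ sol2 (ρ - K0'.sum id) ∪
    (sol2 (ρ - K0'.sum id)).biUnion (fun δ0 =>
      (insert δ0 K0').biUnion (fun a0 =>
        ((insert δ0 K0').erase a0).image (fun c => δ0 + a0 - c) ∪ sol2 (δ0 + a0)))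

lemma bad_subset_BigU [NeZero n] (hk2 : 2 ≤ k) {ρ : ZMod n} {Z : Finset (ZMod n)}
    (hZ : Z ∈ Bad k ρ) :
    ∃ K0' ∈ (Finset.univ : Finset (ZMod n)).powersetCard (k-1), Z ⊆ BigU ρ K0' := by
  classical
  obtain ⟨hcard, hlt, -⟩ := (mem_Bad k).mp hZ
  have hne : Z.Nonempty := Finset.card_pos.mp (by omega)
  obtain ⟨z, hzZ, hz1⟩ := exists_boundary hne hlt
  have herase : k - 1 ≤ (Z.erase z).card := by
    rw [Finset.card_erase_of_mem hzZ]; omega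
  obtain ⟨K0'', hsub'', hcard''⟩ := Finset.exists_subset_card_eq herase
  have hzK0'' : z ∉ K0'' := fun h => (Finset.mem_erase.mp (hsub'' h)).1 rfl
  set K0 := insert z K0'' with hK0def
  have hK0c : K0.card = k := by
    rw [hK0def, Finset.card_insert_of_notMem hzK0'', hcard'']; omega
  have hK0Z : K0 ⊆ Z := by
    intro y hy
    rcases Finset.mem_insert.mp hy with rfl | hy
    · exact hzZ
    · exact Finset.mem_of_mem_erase (hsub'' hy)
  have hzK0 : z ∈ K0 := Finset.mem_insert_self _ _
  set δ0 := ρ - K0.sum id with hδ0def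
  have hδ0K0 : δ0 ∈ K0 := bad_key k hZ hzZ hz1 hK0Z hK0c hzK0
  obtain ⟨a0, ha0''⟩ : K0''.Nonempty := Finset.card_pos.mp (by omega)
  have ha0K0 : a0 ∈ K0 := Finset.mem_insert_of_mem ha0''
  have ha0z : a0 ≠ z := fun h => hzK0'' (h ▸ ha0'')
  set E := K0.erase δ0 with hEdef
  have hinsE : insert δ0 E = K0 := Finset.insert_erase hδ0K0
  have hEsum : E.sum id = K0.sum id - δ0 := by
    have := Finset.sum_erase_add K0 id hδ0K0
    simp only [id_eq] at this ⊢
    linear_combination this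
  have hδ0sol : δ0 ∈ sol2 (ρ - E.sum id) := by
    rw [mem_sol2, hEsum, hδ0def]
    ring
  refine ⟨E, Finset.mem_powersetCard_univ.mpr ?_, ?_⟩
  · rw [hEdef, Finset.card_erase_of_mem hδ0K0, hK0c]
  intro b hbZ
  rw [BigU]
  by_cases hbK0 : b ∈ K0
  · rcases Finset.mem_insert.mp (hinsE ▸ hbK0) with rfl | hbE
    · exact Finset.mem_union_left _ (Finset.mem_union_right _ hδ0sol)
    · exact Finset.mem_union_left _ (Finset.mem_union_left _ hbE)
  · -- b ∈ Z \ K0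
    set Kb := insert b (K0.erase a0) with hKbdef
    have hbea : b ∉ K0.erase a0 := fun h => hbK0 (Finset.mem_of_mem_erase h)
    have hKbc : Kb.card = k := by
      rw [hKbdef, Finset.card_insert_of_notMem hbea, Finset.card_erase_of_mem ha0K0, hK0c]
      omega
    have hKbZ : Kb ⊆ Z := by
      intro y hy
      rcases Finset.mem_insert.mp hy with rfl | hy
      · exact hbZ
      · exact hK0Z (Finset.mem_of_mem_erase hy)
    have hzKb : z ∈ Kb := Finset.mem_insert_of_mem (Finset.mem_erase.mpr ⟨Ne.symm ha0z, hzK0⟩)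
    have hδb : ρ - Kb.sum id ∈ Kb := bad_key k hZ hzZ hz1 hKbZ hKbc hzKb
    have hKbsum : Kb.sum id = K0.sum id - a0 + b := by
      rw [hKbdef, Finset.sum_insert hbea]
      have := Finset.sum_erase_add K0 id ha0K0
      simp only [id_eq] at this ⊢
      linear_combination this
    have hδbval : ρ - Kb.sum id = δ0 + a0 - b := by
      rw [hKbsum, hδ0def]; ring
    rw [hδbval] at hδb
    apply Finset.mem_union_right
    rw [Finset.mem_biUnion]
    refine ⟨δ0, hδ0sol, ?_⟩
    rw [Finset.mem_biUnion]
    refine ⟨a0, by rw [hinsE]; exact ha0K0, ?_⟩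
    rcases Finset.mem_insert.mp hδb with heq | hmem
    · -- δ0 + a0 - b = b
      apply Finset.mem_union_right
      rw [mem_sol2]
      linear_combination -heq
    · -- δ0 + a0 - b ∈ K0.erase a0
      apply Finset.mem_union_left
      rw [Finset.mem_image]
      exact ⟨δ0 + a0 - b, by rw [hinsE]; exact hmem, by ring⟩


def ub (k : ℕ) : ℕ := k + 1 + 2*(k*(k+2))

lemma card_BigU [NeZero n] {ρ : ZMod n} {K0' : Finset (ZMod n)} (k : ℕ)
    (h : K0'.card = k - 1) (hk : 1 ≤ k) : (BigU ρ K0').card ≤ ub k := by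
  classical
  have hsol : ∀ c : ZMod n, (sol2 c).card ≤ 2 := card_sol2
  have h1 : (K0' ∪ sol2 (ρ - K0'.sum id)).card ≤ (k - 1) + 2 :=
    (Finset.card_union_le _ _).trans (by gcongr <;> simp [h, hsol])
  have h2 : ((sol2 (ρ - K0'.sum id)).biUnion (fun δ0 =>
      (insert δ0 K0').biUnion (fun a0 =>
        ((insert δ0 K0').erase a0).image (fun c => δ0 + a0 - c) ∪ sol2 (δ0 + a0)))).card
      ≤ 2 * (k * (k + 2)) := by
    apply (Finset.card_biUnion_le).trans
    apply (Finset.sum_le_card_nsmul _ _ (k * (k+2)) ?_).trans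
    · rw [smul_eq_mul]
      exact Nat.mul_le_mul_right _ (hsol _)
    intro δ0 _
    apply (Finset.card_biUnion_le).trans
    apply (Finset.sum_le_card_nsmul _ _ (k+2) ?_).trans
    · rw [smul_eq_mul]
      apply Nat.mul_le_mul_right
      calc (insert δ0 K0').card ≤ K0'.card + 1 := Finset.card_insert_le _ _
      _ ≤ k := by omega
    intro a0 _
    apply (Finset.card_union_le _ _).trans
    have : (((insert δ0 K0').erase a0).image (fun c => δ0 + a0 - c)).card ≤ k := by
      apply (Finset.card_image_le).trans
      calc ((insert δ0 K0').erase a0).card ≤ (insert δ0 K0').card := Finset.card_erase_le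
      _ ≤ K0'.card + 1 := Finset.card_insert_le _ _
      _ ≤ k := by omega
    have := hsol (δ0 + a0)
    omega
  calc (BigU ρ K0').card ≤ _ + _ := Finset.card_union_le _ _
  _ ≤ ((k-1) + 2) + 2*(k*(k+2)) := by omega
  _ ≤ ub k := by unfold ub; omega

lemma bad_one_empty [NeZero n] (ρ : ZMod n) : Bad 1 ρ = ∅ := by
  classical
  rw [Finset.eq_empty_iff_forall_notMem]
  intro Z hZ
  obtain ⟨hcard, hlt, -⟩ := (mem_Bad 1).mp hZ
  have hne : Z.Nonempty := Finset.card_pos.mp (by omega)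
  obtain ⟨z, hzZ, hz1⟩ := exists_boundary hne hlt
  have hsingle : ∀ b ∈ Z, ({b} : Finset (ZMod n)) ⊆ Z ∧ ({b} : Finset (ZMod n)).card = 1 := by
    intro b hb
    exact ⟨Finset.singleton_subset_iff.mpr hb, rfl⟩
  have hstep : ∀ b ∈ Z, b + 1 ∈ Z := by
    intro b hb
    obtain ⟨hs, hc⟩ := hsingle b hb
    have h1 : ρ - b ∈ Z := by
      have := (bad_sums 1 hZ hs hc).1
      simpa using this
    obtain ⟨hs2, hc2⟩ := hsingle _ h1
    have h2 : ρ + 1 - (ρ - b) ∈ Z := by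
      have := (bad_sums 1 hZ hs2 hc2).2
      simpa using this
    convert h2 using 1
    ring
  exact hz1 (hstep z hzZ)

lemma card_Bad [NeZero n] {k : ℕ} (hk : 1 ≤ k) (ρ : ZMod n) :
    (Bad k ρ).card ≤ n.choose (k-1) * 2 ^ (ub k) := by
  classical
  rcases eq_or_lt_of_le hk with heq | hk2
  · rw [← heq, bad_one_empty]
    simp
  have hk2 : 2 ≤ k := hk2
  have hsub : Bad k ρ ⊆ (Finset.univ.powersetCard (k-1)).biUnion
      (fun K0' => (BigU ρ K0').powerset) := by
    intro Z hZ
    obtain ⟨K0', hmem, hsubU⟩ := bad_subset_BigU k hk2 hZ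
    exact Finset.mem_biUnion.mpr ⟨K0', hmem, Finset.mem_powerset.mpr hsubU⟩
  apply (Finset.card_le_card hsub).trans
  apply (Finset.card_biUnion_le).trans
  apply (Finset.sum_le_card_nsmul _ _ (2 ^ ub k) ?_).trans
  · rw [smul_eq_mul, Finset.card_powersetCard, Finset.card_univ, ZMod.card]
  intro K0' hmem
  rw [Finset.card_powerset]
  exact Nat.pow_le_pow_right (by omega)
    (card_BigU k (Finset.mem_powersetCard_univ.mp hmem) hk)


def S1 [NeZero n] (k : ℕ) (ρ : ZMod n) : Finset (Finset (ZMod n)) :=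
  (Finset.univ.powersetCard (k+1)).filter (fun A => A.sum id = ρ)

lemma sum_card_S1 [NeZero n] (k : ℕ) :
    ∑ ρ : ZMod n, (S1 k ρ).card = n.choose (k+1) := by
  classical
  have h := Finset.card_eq_sum_card_fiberwise (f := fun A : Finset (ZMod n) => A.sum id)
    (s := Finset.univ.powersetCard (k+1)) (t := Finset.univ) (fun x _ => Finset.mem_univ _)
  rw [Finset.card_powersetCard, Finset.card_univ, ZMod.card] at h
  exact h.symm

lemma exists_rho [NeZero n] (k : ℕ) : ∃ ρ : ZMod n,
    n * ((S1 k ρ).card + (S1 k (ρ+1)).card) ≤ 2 * n.choose (k+1) := by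
  have hne : (Finset.univ : Finset (ZMod n)).Nonempty := ⟨0, Finset.mem_univ _⟩
  obtain ⟨ρ0, -, hmin⟩ := Finset.exists_min_image Finset.univ
      (fun ρ => (S1 (n := n) k ρ).card + (S1 k (ρ+1)).card) hne
  refine ⟨ρ0, ?_⟩
  have hsum : ∑ ρ : ZMod n, ((S1 k ρ).card + (S1 k (ρ+1)).card) = 2 * n.choose (k+1) := by
    rw [Finset.sum_add_distrib, sum_card_S1]
    have h2 : ∑ ρ : ZMod n, (S1 k (ρ+1)).card = ∑ ρ : ZMod n, (S1 k ρ).card :=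
      Fintype.sum_equiv (Equiv.addRight (1 : ZMod n)) _ _ (fun ρ => rfl)
    rw [h2, sum_card_S1]
    ring
  calc n * ((S1 k ρ0).card + (S1 k (ρ0+1)).card)
      = ∑ _ρ : ZMod n, ((S1 k ρ0).card + (S1 k (ρ0+1)).card) := by
        rw [Finset.sum_const, Finset.card_univ, ZMod.card, smul_eq_mul]
  _ ≤ ∑ ρ : ZMod n, ((S1 k ρ).card + (S1 k (ρ+1)).card) :=
        Finset.sum_le_sum (fun i _ => hmin i (Finset.mem_univ i))
  _ = 2 * n.choose (k+1) := hsum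

lemma exists_patch [NeZero n] (k : ℕ) {Z : Finset (ZMod n)} (h1 : k ≤ Z.card) (h2 : Z.card < n) :
    ∃ A : Finset (ZMod n), A.card = k + 1 ∧ ∃ x K, x ∉ Z ∧ K ⊆ Z ∧ A = insert x K := by
  classical
  obtain ⟨K, hKZ, hKc⟩ := Finset.exists_subset_card_eq h1
  have hcompl : Zᶜ.Nonempty := by
    rw [← Finset.card_pos, Finset.card_compl, Fintype.card_eq_nat_card, Nat.card_zmod]
    omega
  obtain ⟨x, hx⟩ := hcompl
  have hxZ : x ∉ Z := Finset.mem_compl.mp hx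
  refine ⟨insert x K, ?_, x, K, hxZ, hKZ, rfl⟩
  rw [Finset.card_insert_of_notMem (fun h => hxZ (hKZ h)), hKc]

noncomputable def patch [NeZero n] (k : ℕ) (Z : Finset (ZMod n)) : Finset (ZMod n) :=
  if h : k ≤ Z.card ∧ Z.card < n then (exists_patch k h.1 h.2).choose else ∅

lemma patch_spec [NeZero n] (k : ℕ) {Z : Finset (ZMod n)} (h1 : k ≤ Z.card) (h2 : Z.card < n) :
    (patch k Z).card = k + 1 ∧ ∃ x K, x ∉ Z ∧ K ⊆ Z ∧ patch k Z = insert x K := by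
  rw [patch, dif_pos (⟨h1, h2⟩ : k ≤ Z.card ∧ Z.card < n)]
  exact (exists_patch k h1 h2).choose_spec

noncomputable def Fam [NeZero n] (k : ℕ) (ρ : ZMod n) : Finset (Finset (ZMod n)) :=
  (S1 k ρ ∪ S1 k (ρ+1)) ∪ (Bad k ρ).image (patch k)

lemma card_Fam [NeZero n] (k : ℕ) (ρ : ZMod n) :
    (Fam k ρ).card ≤ (S1 k ρ).card + (S1 k (ρ+1)).card + (Bad k ρ).card := by
  calc (Fam k ρ).card ≤ (S1 k ρ ∪ S1 k (ρ+1)).card + ((Bad k ρ).image (patch k)).card :=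
        Finset.card_union_le _ _
  _ ≤ ((S1 k ρ).card + (S1 k (ρ+1)).card) + (Bad k ρ).card := by
        have := Finset.card_union_le (S1 (n := n) k ρ) (S1 k (ρ+1))
        have := Finset.card_image_le (s := Bad (n := n) k ρ) (f := patch k)
        omega

lemma Fam_blocks [NeZero n] (k : ℕ) (ρ : ZMod n) : ∀ A ∈ Fam k ρ, A.card = k + 1 := by
  intro A hA
  rcases Finset.mem_union.mp hA with h | h
  · rcases Finset.mem_union.mp h with h | h <;>
    · exact Finset.mem_powersetCard_univ.mp (Finset.mem_filter.mp h).1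
  · obtain ⟨Z, hZ, rfl⟩ := Finset.mem_image.mp h
    obtain ⟨h1, h2, -⟩ := (mem_Bad k).mp hZ
    exact (patch_spec k h1 h2).1

lemma inter_singleton_of [NeZero n] {X K : Finset (ZMod n)} {x : ZMod n}
    (hxZ : x ∉ Xᶜ) (hKZ : K ⊆ Xᶜ) : (X ∩ insert x K).card = 1 := by
  classical
  have hxX : x ∈ X := by
    by_contra h
    exact hxZ (Finset.mem_compl.mpr h)
  have : X ∩ insert x K = {x} := by
    ext y
    simp only [Finset.mem_inter, Finset.mem_insert, Finset.mem_singleton]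
    constructor
    · rintro ⟨hyX, rfl | hyK⟩
      · rfl
      · exact absurd hyX (Finset.mem_compl.mp (hKZ hyK))
    · rintro rfl
      exact ⟨hxX, Or.inl rfl⟩
  rw [this, Finset.card_singleton]

lemma Fam_cover [NeZero n] (k : ℕ) (ρ : ZMod n) :
    ∀ X : Finset (ZMod n), 1 ≤ X.card → X.card + k ≤ n →
      ∃ A ∈ Fam k ρ, (X ∩ A).card = 1 := by
  classical
  intro X hX1 hXk
  have hXcard : X.card ≤ n := by omega
  have hZcard : Xᶜ.card = n - X.card := by
    rw [Finset.card_compl, Fintype.card_eq_nat_card, Nat.card_zmod]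
  have h1 : k ≤ Xᶜ.card := by omega
  have h2 : Xᶜ.card < n := by omega
  by_cases hcov : covered k ρ Xᶜ
  · obtain ⟨K, hKmem, x, hxZ, hsum⟩ := hcov
    obtain ⟨hKZ, hKc⟩ := Finset.mem_powersetCard.mp hKmem
    have hxK : x ∉ K := fun h => hxZ (hKZ h)
    have hc : (insert x K).card = k + 1 := by
      rw [Finset.card_insert_of_notMem hxK, hKc]
    have hs : (insert x K).sum id = K.sum id + x := by
      rw [Finset.sum_insert hxK]
      simp only [id_eq]
      ring
    refine ⟨insert x K, Finset.mem_union_left _ ?_, inter_singleton_of hxZ hKZ⟩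
    rcases hsum with h | h
    · exact Finset.mem_union_left _ (Finset.mem_filter.mpr
        ⟨Finset.mem_powersetCard_univ.mpr hc, by rw [hs, h]⟩)
    · exact Finset.mem_union_right _ (Finset.mem_filter.mpr
        ⟨Finset.mem_powersetCard_univ.mpr hc, by rw [hs, h]⟩)
  · have hZBad : Xᶜ ∈ Bad k ρ := (mem_Bad k).mpr ⟨h1, h2, hcov⟩
    obtain ⟨hcA, x, K, hxZ, hKZ, hAeq⟩ := patch_spec k h1 h2
    refine ⟨patch k Xᶜ, Finset.mem_union_right _ (Finset.mem_image_of_mem _ hZBad), ?_⟩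
    rw [hAeq]
    exact inter_singleton_of hxZ hKZ


def zmodEquivFin (n : ℕ) [NeZero n] : ZMod n ≃ Fin n :=
  ⟨fun a => ⟨a.val, ZMod.val_lt a⟩, fun i => ((i : ℕ) : ZMod n),
   fun a => by simp [ZMod.natCast_zmod_val],
   fun i => by
    ext
    simp [ZMod.val_cast_of_lt i.isLt]⟩

lemma map_equiv_inter {α β : Type*} [DecidableEq α] [DecidableEq β] (e : α ≃ β)
    (s t : Finset α) :
    (s ∩ t).map e.toEmbedding = s.map e.toEmbedding ∩ t.map e.toEmbedding := by
  ext y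
  simp [Finset.mem_map_equiv]

lemma SENumber_le (n k : ℕ) [NeZero n] (hkn : k + 1 < n) (F : Finset (Finset (ZMod n)))
    (hblocks : ∀ A ∈ F, A.card = k + 1)
    (hcover : ∀ X : Finset (ZMod n), 1 ≤ X.card → X.card + k ≤ n →
      ∃ A ∈ F, (X ∩ A).card = 1) :
    SENumber n (n - k - 1) ≤ F.card := by
  classical
  set e := zmodEquivFin n with he
  set S : Finset (Finset (Fin n)) := F.image (fun A => (A.map e.toEmbedding)ᶜ) with hS
  have hSE : IsSESystem n (n - k - 1) S := by
    constructor
    · intro B hB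
      obtain ⟨A, hA, rfl⟩ := Finset.mem_image.mp hB
      rw [Finset.card_compl, Finset.card_map, hblocks A hA, Fintype.card_fin]
      omega
    · intro X h1 h2
      have h2' : X.card + k ≤ n := by omega
      set X' := X.map e.symm.toEmbedding with hX'
      have hX'c : X'.card = X.card := Finset.card_map _
      obtain ⟨A, hA, hcard1⟩ := hcover X' (by omega) (by omega)
      refine ⟨(A.map e.toEmbedding)ᶜ, Finset.mem_image_of_mem _ hA, ?_⟩
      have hsd : X \ (A.map e.toEmbedding)ᶜ = X ∩ A.map e.toEmbedding := by
        rw [Finset.sdiff_eq_inter_compl, compl_compl]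
      rw [hsd]
      have hmapX : X'.map e.toEmbedding = X := by
        rw [hX']
        ext y
        simp [Finset.mem_map_equiv]
      have := map_equiv_inter e X' A
      rw [hmapX] at this
      rw [← this, Finset.card_map]
      exact hcard1
  have hmem : S.card ∈ {m : ℕ | ∃ S : Finset (Finset (Fin n)), IsSESystem n (n - k - 1) S ∧ S.card = m} :=
    ⟨S, hSE, rfl⟩
  exact (Nat.sInf_le hmem).trans (Finset.card_image_le)

lemma choose_le_pow' (n r : ℕ) : n.choose r ≤ n ^ r := by
  induction r with
  | zero => simp
  | succ r ih =>
    have h1 : n.choose (r+1) * (r+1) = n.choose r * (n - r) := Nat.choose_succ_right_eq n r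
    have h2 : n.choose r * (n - r) ≤ n ^ r * n := Nat.mul_le_mul ih (Nat.sub_le n r)
    calc n.choose (r+1) ≤ n.choose (r+1) * (r+1) := Nat.le_mul_of_pos_right _ (by omega)
    _ = n.choose r * (n - r) := h1
    _ ≤ n ^ r * n := h2
    _ = n ^ (r+1) := by ring


end SE6

open SE6 in
theorem stmt6 (k : ℕ) (hk : 0 < k) :
    ∃ C : ℝ, ∃ N : ℕ, ∀ n : ℕ, N ≤ n → k + 1 < n →
      (SENumber n (n - k - 1) : ℝ) ≤
        (2 / ((k : ℝ) + 1)) * (n.choose k : ℝ) + C * (n : ℝ) ^ (k - 1) := by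
  refine ⟨((2 : ℝ) ^ ub k), k + 2, ?_⟩
  intro n hN hkn
  haveI : NeZero n := ⟨by omega⟩
  obtain ⟨ρ, hρ⟩ := exists_rho (n := n) k
  set g := (S1 k ρ).card + (S1 k (ρ+1)).card with hg
  have hle : SENumber n (n - k - 1) ≤ g + (Bad k ρ).card :=
    le_trans (SENumber_le n k hkn (Fam k ρ) (Fam_blocks k ρ) (Fam_cover k ρ)) (card_Fam k ρ)
  have hmainNat : (k+1) * g ≤ 2 * n.choose k := by
    have h1 : (k+1) * (n * g) ≤ (k+1) * (2 * n.choose (k+1)) := Nat.mul_le_mul_left _ hρ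
    have h2 : n.choose (k+1) * (k+1) = n.choose k * (n - k) := Nat.choose_succ_right_eq n k
    have h3 : n.choose k * (n - k) ≤ n.choose k * n :=
      Nat.mul_le_mul_left _ (Nat.sub_le n k)
    have h4 : n * ((k+1) * g) ≤ n * (2 * n.choose k) := by
      calc n * ((k+1)*g) = (k+1) * (n*g) := by ring
      _ ≤ (k+1) * (2 * n.choose (k+1)) := h1
      _ = 2 * (n.choose (k+1) * (k+1)) := by ring
      _ = 2 * (n.choose k * (n - k)) := by rw [h2]
      _ ≤ 2 * (n.choose k * n) := Nat.mul_le_mul_left _ h3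
      _ = n * (2 * n.choose k) := by ring
    exact Nat.le_of_mul_le_mul_left h4 (by omega)
  have hbadNat : (Bad k ρ).card ≤ n ^ (k-1) * 2 ^ (ub k) :=
    (card_Bad hk ρ).trans (Nat.mul_le_mul_right _ (choose_le_pow' n (k-1)))
  have hkpos : (0:ℝ) < (k:ℝ) + 1 := by positivity
  have hmainR : (g : ℝ) ≤ 2/((k:ℝ)+1) * (n.choose k : ℝ) := by
    rw [div_mul_eq_mul_div, le_div_iff₀ hkpos]
    calc (g:ℝ) * ((k:ℝ)+1) = (((k+1) * g : ℕ) : ℝ) := by push_cast; ring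
    _ ≤ ((2 * n.choose k : ℕ) : ℝ) := by exact_mod_cast hmainNat
    _ = 2 * (n.choose k : ℝ) := by push_cast; ring
  have hbadR : ((Bad k ρ).card : ℝ) ≤ ((2:ℝ) ^ ub k) * (n:ℝ)^(k-1) := by
    calc ((Bad k ρ).card : ℝ) ≤ ((n ^ (k-1) * 2 ^ ub k : ℕ) : ℝ) := by exact_mod_cast hbadNat
    _ = ((2:ℝ) ^ ub k) * (n:ℝ)^(k-1) := by push_cast; ring
  calc (SENumber n (n - k - 1) : ℝ) ≤ ((g + (Bad k ρ).card : ℕ) : ℝ) := by exact_mod_cast hle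
  _ = (g:ℝ) + ((Bad k ρ).card : ℝ) := by push_cast; ring
  _ ≤ 2/((k:ℝ)+1) * (n.choose k : ℝ) + ((2:ℝ) ^ ub k) * (n:ℝ)^(k-1) :=
      add_le_add hmainR hbadR
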